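/- Suppose k₂ = 0, b > 0, β₁k₁ ≤ b + α, and the nonnegative parameters b, α, β₁, β₂, k₁, k₂ satisfy conditions (C). Then for every initial point λ⁰ ∈ S³, the sequence u⁽ⁿ⁾ of second coordinates of the iterates Vⁿ(λ⁰) is non-increasing and converges to 0 as n → ∞. -/
import Mathlib


/-- The discrete-time SISI epidemic operator. -/
noncomputable def sisiV (b α β₁ β₂ k₁ k₂ : ℝ) (p : ℝ × ℝ × ℝ × ℝ) : ℝ × ℝ × ℝ × ℝ :=
  (p.1 + b - b * p.1 - β₁ * (k₁ * p.2.1 + k₂ * p.2.2.2) * p.1,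
   p.2.1 - b * p.2.1 - α * p.2.1 + β₁ * (k₁ * p.2.1 + k₂ * p.2.2.2) * p.1,
   p.2.2.1 - b * p.2.2.1 + α * p.2.1 - β₂ * (k₁ * p.2.1 + k₂ * p.2.2.2) * p.2.2.1,
   p.2.2.2 - b * p.2.2.2 + β₂ * (k₁ * p.2.1 + k₂ * p.2.2.2) * p.2.2.1)

/-- The simplex S³ in ℝ⁴. -/
def simplexS3 : Set (ℝ × ℝ × ℝ × ℝ) :=
  {p | 0 ≤ p.1 ∧ 0 ≤ p.2.1 ∧ 0 ≤ p.2.2.1 ∧ 0 ≤ p.2.2.2 ∧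
       p.1 + p.2.1 + p.2.2.1 + p.2.2.2 = 1}

/-- Conditions (C) on the parameters. -/
def condC (b α β₁ β₂ k₁ k₂ : ℝ) : Prop :=
  α + b ≤ 1 ∧ β₁ * k₂ ≤ 2 ∧ β₂ * k₁ ≤ 2 ∧ b + β₂ * k₂ ≤ 1 ∧
  |b - β₁ * k₁| ≤ 1 ∧ |b - β₂ * k₂| ≤ 1 ∧ |b - β₁ * k₂| ≤ 1 ∧
  |α + b - β₁ * k₁| ≤ 1 ∧ |α - b - β₂ * k₁| ≤ 1

set_option maxHeartbeats 1600000 in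
theorem u_antitone_tendsto_zero (b α β₁ β₂ k₁ k₂ : ℝ)
    (hk₂ : k₂ = 0) (hb : 0 < b)
    (hα : 0 ≤ α) (hβ₁ : 0 ≤ β₁) (hβ₂ : 0 ≤ β₂) (hk₁ : 0 ≤ k₁)
    (hle : β₁ * k₁ ≤ b + α) (hC : condC b α β₁ β₂ k₁ k₂) :
    ∀ lam0 ∈ simplexS3,
      Antitone (fun n => ((sisiV b α β₁ β₂ k₁ k₂)^[n] lam0).2.1) ∧
      Filter.Tendsto (fun n => ((sisiV b α β₁ β₂ k₁ k₂)^[n] lam0).2.1)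
        Filter.atTop (nhds 0) := by
  obtain ⟨hC1, hC2, hC3, hC4, hC5, hC6, hC7, hC8, hC9⟩ := hC
  have hC9' : β₂ * k₁ + b - α ≤ 1 := by
    have := (abs_le.mp hC9).1; linarith
  subst hk₂
  intro lam0 hlam0
  set f := sisiV b α β₁ β₂ k₁ 0 with hf
  have hfapp : ∀ p : ℝ × ℝ × ℝ × ℝ, f p =
      (p.1 + b - b * p.1 - β₁ * (k₁ * p.2.1 + 0 * p.2.2.2) * p.1,
       p.2.1 - b * p.2.1 - α * p.2.1 + β₁ * (k₁ * p.2.1 + 0 * p.2.2.2) * p.1,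
       p.2.2.1 - b * p.2.2.1 + α * p.2.1 - β₂ * (k₁ * p.2.1 + 0 * p.2.2.2) * p.2.2.1,
       p.2.2.2 - b * p.2.2.2 + β₂ * (k₁ * p.2.1 + 0 * p.2.2.2) * p.2.2.1) := fun p => rfl
  clear_value f
  -- invariance of the simplex
  have hinv : ∀ n, f^[n] lam0 ∈ simplexS3 := by
    intro n
    induction n with
    | zero => simpa using hlam0
    | succ n ih =>
      rw [Function.iterate_succ_apply', hfapp]
      obtain ⟨hx, hu, hy, hv, hs⟩ := ih
      have hx1 : (f^[n] lam0).1 ≤ 1 := by linarith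
      have hu1 : (f^[n] lam0).2.1 ≤ 1 := by linarith
      have hy1 : (f^[n] lam0).2.2.1 ≤ 1 := by linarith
      set x := (f^[n] lam0).1
      set u := (f^[n] lam0).2.1
      set y := (f^[n] lam0).2.2.1
      set v := (f^[n] lam0).2.2.2
      refine ⟨?_, ?_, ?_, ?_, ?_⟩
      · show 0 ≤ x + b - b * x - β₁ * (k₁ * u + 0 * v) * x
        have h1 : β₁ * k₁ * u ≤ 1 := by nlinarith
        nlinarith [mul_nonneg hx (sub_nonneg.mpr h1)]
      · show 0 ≤ u - b * u - α * u + β₁ * (k₁ * u + 0 * v) * x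
        nlinarith [mul_nonneg (mul_nonneg (mul_nonneg hβ₁ hk₁) hu) hx]
      · show 0 ≤ y - b * y + α * u - β₂ * (k₁ * u + 0 * v) * y
        rcases le_or_gt (β₂ * k₁ * u) (1 - b) with h | h
        · nlinarith [mul_nonneg hy (sub_nonneg.mpr h), mul_nonneg hα hu]
        · nlinarith [mul_nonneg (sub_nonneg.mpr hy1)
              (le_of_lt (by linarith : (0:ℝ) < β₂ * k₁ * u - (1 - b))),
            mul_nonneg hα (mul_nonneg hu (sub_nonneg.mpr hu1)),
            mul_nonneg (mul_nonneg hβ₂ hk₁) (mul_nonneg hu (sub_nonneg.mpr hu1))]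
      · show 0 ≤ v - b * v + β₂ * (k₁ * u + 0 * v) * y
        nlinarith [mul_nonneg (mul_nonneg (mul_nonneg hβ₂ hk₁) hu) hy]
      · show x + b - b * x - β₁ * (k₁ * u + 0 * v) * x +
            (u - b * u - α * u + β₁ * (k₁ * u + 0 * v) * x) +
            (y - b * y + α * u - β₂ * (k₁ * u + 0 * v) * y) +
            (v - b * v + β₂ * (k₁ * u + 0 * v) * y) = 1
        linear_combination (1 - b) * hs
  -- the recurrence for u
  have hrec : ∀ n, (f^[n+1] lam0).2.1 =
      (f^[n] lam0).2.1 * (1 - b - α + β₁ * k₁ * (f^[n] lam0).1) := by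
    intro n
    rw [Function.iterate_succ_apply', hfapp]
    show (f^[n] lam0).2.1 - b * (f^[n] lam0).2.1 - α * (f^[n] lam0).2.1 +
        β₁ * (k₁ * (f^[n] lam0).2.1 + 0 * (f^[n] lam0).2.2.2) * (f^[n] lam0).1 = _
    ring
  -- antitone
  have hanti : Antitone (fun n => (f^[n] lam0).2.1) := by
    apply antitone_nat_of_succ_le
    intro n
    obtain ⟨hx, hu, hy, hv, hs⟩ := hinv n
    show (f^[n+1] lam0).2.1 ≤ (f^[n] lam0).2.1
    rw [hrec n]
    have hx1 : (f^[n] lam0).1 ≤ 1 := by linarith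
    set x := (f^[n] lam0).1
    set u := (f^[n] lam0).2.1
    nlinarith [mul_nonneg (mul_nonneg hβ₁ hk₁) (sub_nonneg.mpr hx1)]
  refine ⟨hanti, ?_⟩
  set U : ℕ → ℝ := fun n => (f^[n] lam0).2.1 with hU
  have hUnn : ∀ n, 0 ≤ U n := fun n => (hinv n).2.1
  have hbdd : BddBelow (Set.range U) := ⟨0, by rintro _ ⟨n, rfl⟩; exact hUnn n⟩
  have htend : Filter.Tendsto U Filter.atTop (nhds (⨅ n, U n)) :=
    tendsto_atTop_ciInf hanti hbdd
  obtain ⟨L, hLdef⟩ : ∃ L, L = ⨅ n, U n := ⟨_, rfl⟩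
  rw [← hLdef] at htend
  have hL0 : 0 ≤ L := hLdef ▸ le_ciInf hUnn
  have hLle : ∀ n, L ≤ U n := fun n => hLdef ▸ ciInf_le hbdd n
  rcases eq_or_lt_of_le hL0 with h | hLpos
  · rwa [← h] at htend
  exfalso
  obtain ⟨q, hq⟩ : ∃ q, q = 1 - b - α + β₁ * k₁ * (1 - L) := ⟨_, rfl⟩
  have hstep : ∀ n, U (n + 1) ≤ q * U n := by
    intro n
    obtain ⟨hx, hu, hy, hv, hs⟩ := hinv n
    have hun : U n = (f^[n] lam0).2.1 := rfl
    have hrec' : U (n + 1) = U n * (1 - b - α + β₁ * k₁ * (f^[n] lam0).1) := hrec n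
    rw [hrec']
    have hxL : (f^[n] lam0).1 ≤ 1 - L := by
      have h2 := hLle n
      rw [hun] at h2
      linarith
    have hfq : 1 - b - α + β₁ * k₁ * (f^[n] lam0).1 ≤ q := by
      have := mul_le_mul_of_nonneg_left hxL (mul_nonneg hβ₁ hk₁)
      rw [hq]; linarith
    calc U n * (1 - b - α + β₁ * k₁ * (f^[n] lam0).1) ≤ U n * q :=
          mul_le_mul_of_nonneg_left hfq (hUnn n)
      _ = q * U n := mul_comm _ _
  have hL1 : L ≤ 1 := by
    have h0 := hLle 0
    have h1 : U 0 = (f^[0] lam0).2.1 := rfl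
    obtain ⟨hx, hu, hy, hv, hs⟩ := hinv 0
    rw [h1] at h0; linarith
  have hq1 : q < 1 := by
    rw [hq]
    rcases eq_or_lt_of_le (mul_nonneg hβ₁ hk₁) with h | h
    · rw [← h]; nlinarith
    · nlinarith [mul_pos h hLpos, mul_le_mul_of_nonneg_left hL1 (le_of_lt h)]
  have htend1 : Filter.Tendsto (fun n => U (n + 1)) Filter.atTop (nhds L) :=
    htend.comp (Filter.tendsto_add_atTop_nat 1)
  have htend2 : Filter.Tendsto (fun n => q * U n) Filter.atTop (nhds (q * L)) :=
    htend.const_mul q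
  have hLq : L ≤ q * L := le_of_tendsto_of_tendsto' htend1 htend2 hstep
  nlinarith [mul_pos (sub_pos.mpr hq1) hLpos]
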